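/- arXiv:1210.3449 — 3 statements merged into one kernel-verified Lean document; each statement's English description precedes it below -/
import Mathlib

section
/- Let H ∈ ℂ^{n_r × n_t} and let A_i, A_j ∈ ℂ^{n_t × n_t} satisfy the Hurwitz–Radon condition A_i A_j^H + A_j A_i^H = 0. Then tr(Ȟ Ǎ_i Ǎ_jᵀ Ȟᵀ) = 0; i.e., the corresponding columns h_i = vec(H A_i)~ and h_j = vec(H A_j)~ of the real equivalent channel matrix are orthogonal. -/
open Matrix

/-- Realification of a complex matrix: each entry `x = x_I + j x_Q` is replaced by the
real `2 × 2` block `[[x_I, -x_Q], [x_Q, x_I]]`. -/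
def realify {n m : Type*} (A : Matrix n m ℂ) : Matrix (n × Fin 2) (m × Fin 2) ℝ :=
  Matrix.of fun ip jq =>
    !![(A ip.1 jq.1).re, -(A ip.1 jq.1).im; (A ip.1 jq.1).im, (A ip.1 jq.1).re] ip.2 jq.2

lemma realify_mul {n m k : Type*} [Fintype m] (A : Matrix n m ℂ) (B : Matrix m k ℂ) :
    realify (A * B) = realify A * realify B := by
  ext ⟨i, p⟩ ⟨j, q⟩
  simp only [realify, Matrix.mul_apply, Matrix.of_apply, Fintype.sum_prod_type]
  fin_cases p <;> fin_cases q <;>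
    simp [Fin.sum_univ_succ, Complex.re_sum, Complex.im_sum, Complex.mul_re,
      Complex.mul_im, Finset.sum_add_distrib, Finset.sum_sub_distrib, sub_eq_add_neg,
      Finset.sum_neg_distrib] <;> ring

lemma realify_conjTranspose {n m : Type*} (A : Matrix n m ℂ) :
    realify Aᴴ = (realify A)ᵀ := by
  ext ⟨i, p⟩ ⟨j, q⟩
  fin_cases p <;> fin_cases q <;>
    simp [realify, Matrix.conjTranspose_apply]

lemma trace_realify {n : Type*} [Fintype n] (A : Matrix n n ℂ) :
    Matrix.trace (realify A) = 2 * (Matrix.trace A).re := by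
  simp [Matrix.trace, Matrix.diag, realify, Fintype.sum_prod_type, Fin.sum_univ_succ,
    Complex.re_sum, Finset.sum_add_distrib, two_mul]

/-- Hurwitz–Radon orthogonal weight matrices give orthogonal columns of the real
equivalent channel matrix: `tr(Ȟ Ǎᵢ Ǎⱼᵀ Ȟᵀ) = 0`. -/
theorem hurwitz_radon_orthogonal_columns (nr nt : ℕ)
    (H : Matrix (Fin nr) (Fin nt) ℂ) (Ai Aj : Matrix (Fin nt) (Fin nt) ℂ)
    (hHR : Ai * Ajᴴ + Aj * Aiᴴ = 0) :
    Matrix.trace (realify H * realify Ai * (realify Aj)ᵀ * (realify H)ᵀ) = 0 := by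
  have h1 : realify H * realify Ai * (realify Aj)ᵀ * (realify H)ᵀ
      = realify (H * Ai * Ajᴴ * Hᴴ) := by
    rw [realify_mul, realify_mul, realify_mul, realify_conjTranspose, realify_conjTranspose]
  rw [h1, trace_realify]
  have hskew : (H * Ai * Ajᴴ * Hᴴ)ᴴ = -(H * Ai * Ajᴴ * Hᴴ) := by
    have h2 : Ai * Ajᴴ = -(Aj * Aiᴴ) := by
      rw [eq_neg_iff_add_eq_zero]; exact hHR
    simp only [Matrix.conjTranspose_mul, Matrix.conjTranspose_conjTranspose]
    calc H * (Aj * (Aiᴴ * Hᴴ)) = H * (Aj * Aiᴴ) * Hᴴ := by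
          simp [Matrix.mul_assoc]
      _ = H * (-(Ai * Ajᴴ)) * Hᴴ := by rw [← neg_eq_iff_eq_neg.mpr h2]
      _ = -(H * Ai * Ajᴴ * Hᴴ) := by simp [Matrix.mul_assoc]
  have htr : star (Matrix.trace (H * Ai * Ajᴴ * Hᴴ)) = -(Matrix.trace (H * Ai * Ajᴴ * Hᴴ)) := by
    rw [← Matrix.trace_conjTranspose, hskew, Matrix.trace_neg]
  have : (Matrix.trace (H * Ai * Ajᴴ * Hᴴ)).re = 0 := by
    have := congrArg Complex.re htr
    simp only [Complex.star_def, Complex.conj_re, Complex.neg_re] at this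
    linarith
  rw [this, mul_zero]
end

section
/- Let H_eq = [H_1 H_2] be a real matrix with full column rank and QR decomposition H_eq = QR with Q = [Q_1 Q_2] having orthonormal columns and R = [[R_1, E],[0, R_2]] with R_2 square upper triangular and invertible. If both H_2ᵀH_2 and EᵀE are block diagonal with k blocks of size γ×γ, then R_2 is block diagonal with k blocks of size γ×γ. -/
open Matrix

theorem block_orthogonal_R2 (N L k γ : ℕ) (hk : 1 ≤ k) (hγ : 1 ≤ γ)
    (Heq : Matrix (Fin N) (Fin L ⊕ Fin (k * γ)) ℝ)
    (Q : Matrix (Fin N) (Fin L ⊕ Fin (k * γ)) ℝ)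
    (R1 : Matrix (Fin L) (Fin L) ℝ)
    (E : Matrix (Fin L) (Fin (k * γ)) ℝ)
    (R2 : Matrix (Fin (k * γ)) (Fin (k * γ)) ℝ)
    (hrank : LinearIndependent ℝ (fun j : Fin L ⊕ Fin (k * γ) => fun i : Fin N => Heq i j))
    (hQR : Heq = Q * Matrix.fromBlocks R1 E 0 R2)
    (hQ : Qᵀ * Q = 1)
    (hR2tri : ∀ i j : Fin (k * γ), j < i → R2 i j = 0)
    (hR2inv : IsUnit R2)
    (hH2 : ∀ i j : Fin (k * γ), (i : ℕ) / γ ≠ (j : ℕ) / γ →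
      ((Heq.submatrix id Sum.inr)ᵀ * Heq.submatrix id Sum.inr) i j = 0)
    (hE : ∀ i j : Fin (k * γ), (i : ℕ) / γ ≠ (j : ℕ) / γ → (Eᵀ * E) i j = 0) :
    ∀ i j : Fin (k * γ), (i : ℕ) / γ ≠ (j : ℕ) / γ → R2 i j = 0 := by
  -- Step 1: R2ᵀ * R2 is block diagonal
  have hsub : Heq.submatrix id Sum.inr
      = Q * (Matrix.fromBlocks R1 E 0 R2).submatrix id Sum.inr := by
    subst hQR
    ext a b
    simp [Matrix.mul_apply]
  have hHH : (Heq.submatrix id Sum.inr)ᵀ * Heq.submatrix id Sum.inr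
      = Eᵀ * E + R2ᵀ * R2 := by
    rw [hsub, Matrix.transpose_mul, Matrix.mul_assoc,
      ← Matrix.mul_assoc Qᵀ Q, hQ, Matrix.one_mul]
    ext a b
    simp [Matrix.mul_apply, Fintype.sum_sum_type, Matrix.fromBlocks,
      Matrix.add_apply]
  have hkey : ∀ i j : Fin (k * γ), (i : ℕ) / γ ≠ (j : ℕ) / γ →
      (R2ᵀ * R2) i j = 0 := by
    intro i j hij
    have h1 := hH2 i j hij
    rw [hHH] at h1
    have h2 := hE i j hij
    rw [Matrix.add_apply, h2, zero_add] at h1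
    exact h1
  -- Step 2: diagonal of R2 is nonzero
  have hdiag : ∀ i : Fin (k * γ), R2 i i ≠ 0 := by
    have hdet : IsUnit R2.det := (Matrix.isUnit_iff_isUnit_det R2).mp hR2inv
    have hdet_eq : R2.det = ∏ i, R2 i i := Matrix.det_of_upperTriangular hR2tri
    intro i hi
    rw [hdet_eq] at hdet
    exact hdet.ne_zero (Finset.prod_eq_zero (Finset.mem_univ i) hi)
  -- Step 3: strong induction on the row index
  suffices H : ∀ n : ℕ, ∀ i j : Fin (k * γ), (i : ℕ) = n →
      (i : ℕ) / γ ≠ (j : ℕ) / γ → R2 i j = 0 by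
    intro i j h
    exact H i i j rfl h
  intro n
  induction n using Nat.strong_induction_on with
  | _ n ih =>
    intro i j hi hij
    rcases lt_trichotomy (j : ℕ) (i : ℕ) with h | h | h
    · exact hR2tri i j (Fin.lt_def.mpr h)
    · exact absurd (by rw [h]) hij
    · -- i < j
      have hblock : (i : ℕ) / γ < (j : ℕ) / γ :=
        lt_of_le_of_ne (Nat.div_le_div_right h.le) hij
      have hsum := hkey i j hij
      rw [Matrix.mul_apply] at hsum
      have hsingle : ∑ l : Fin (k * γ), R2ᵀ i l * R2 l j = R2 i i * R2 i j := by
        rw [Finset.sum_eq_single i]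
        · simp [Matrix.transpose_apply]
        · intro l _ hl
          rcases lt_or_gt_of_ne (fun hv : (l : ℕ) = (i : ℕ) => hl (Fin.ext hv)) with hlt | hgt
          · have hlb : (l : ℕ) / γ ≠ (j : ℕ) / γ :=
              ne_of_lt (lt_of_le_of_lt (Nat.div_le_div_right hlt.le) hblock)
            rw [ih l (hi ▸ hlt) l j rfl hlb, mul_zero]
          · rw [Matrix.transpose_apply, hR2tri l i (Fin.lt_def.mpr hgt),
              zero_mul]
        · intro hmem
          exact absurd (Finset.mem_univ i) hmem
      rw [hsingle] at hsum
      exact (mul_eq_zero.mp hsum).resolve_left (hdiag i)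
end

section
/- If R is a square upper triangular real matrix with nonzero diagonal entries and RᵀR is block diagonal with k blocks of size γ×γ, then R itself is block diagonal with k blocks of size γ×γ. -/
open Matrix

theorem upper_triangular_block_diag_of_gram_block_diag (k γ : ℕ) (hk : 1 ≤ k) (hγ : 1 ≤ γ)
    (R : Matrix (Fin (k * γ)) (Fin (k * γ)) ℝ)
    (htri : ∀ i j : Fin (k * γ), j < i → R i j = 0)
    (hdiag : ∀ i : Fin (k * γ), R i i ≠ 0)
    (hgram : ∀ i j : Fin (k * γ), (i : ℕ) / γ ≠ (j : ℕ) / γ → (Rᵀ * R) i j = 0) :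
    ∀ i j : Fin (k * γ), (i : ℕ) / γ ≠ (j : ℕ) / γ → R i j = 0 := by
  have key : ∀ n : ℕ, ∀ i j : Fin (k * γ), (i : ℕ) = n →
      (i : ℕ) / γ < (j : ℕ) / γ → R i j = 0 := by
    intro n
    induction n using Nat.strong_induction_on with
    | _ n ih =>
      intro i j hin hlt
      have hgij : (Rᵀ * R) i j = 0 := hgram i j (Nat.ne_of_lt hlt)
      rw [Matrix.mul_apply] at hgij
      simp only [Matrix.transpose_apply] at hgij
      have hsum : ∑ l, R l i * R l j = R i i * R i j := by
        rw [Finset.sum_eq_single i]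
        · intro l _ hl
          rcases lt_or_gt_of_ne hl with h | h
          · have hlval : (l : ℕ) < n := by rw [← hin]; exact h
            have : R l j = 0 := ih l hlval l j rfl
              (lt_of_le_of_lt (Nat.div_le_div_right (le_of_lt h)) hlt)
            simp [this]
          · simp [htri l i h]
        · intro h; exact absurd (Finset.mem_univ i) h
      rw [hsum] at hgij
      rcases mul_eq_zero.mp hgij with h | h
      · exact absurd h (hdiag i)
      · exact h
  intro i j hne
  rcases lt_or_gt_of_ne hne with h | h
  · exact key (i : ℕ) i j rfl h
  · have hji : j < i := by
      by_contra hc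
      exact absurd (Nat.div_le_div_right (Fin.le_def.mp (le_of_not_gt hc)))
        (Nat.not_le_of_lt h)
    exact htri i j hji
end
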